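/- Let k be a field, Δ a simplicial complex, and f, g : Δ → ℝ monotonic functions with |f(σ) − g(σ)| ≤ δ for all σ ∈ Δ, where δ ≥ 0. For each t ∈ ℝ define φ_t : V^f_t → V^g_{t+δ} as the linear map sending the basis vector of a facet σ of Δ^t_f to the same basis vector if σ is a facet of Δ^{t+δ}_g, and to 0 otherwise; define ψ_t : V^g_t → V^f_{t+δ} symmetrically. Then for all s ≤ t the interleaving square commutes: φ_t ∘ v^f_{s,t} = v^g_{s+δ,t+δ} ∘ φ_s, and likewise ψ_t ∘ v^g_{s,t} = v^f_{s+δ,t+δ} ∘ ψ_s. -/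
import Mathlib


/-- `σ` is a facet of `Γ`: a face that is maximal under inclusion. -/
def IsFacet {n : ℕ} (Γ : Set (Finset (Fin n))) (σ : Finset (Fin n)) : Prop :=
  σ ∈ Γ ∧ ∀ τ ∈ Γ, σ ⊆ τ → σ = τ

/-- The sublevel complex `Δ^t_f = {σ ∈ Δ : f σ ≤ t}`. -/
def sublevel {n : ℕ} (Δ : Set (Finset (Fin n))) (f : Finset (Fin n) → ℝ) (t : ℝ) :
    Set (Finset (Fin n)) :=
  {σ | σ ∈ Δ ∧ f σ ≤ t}

/-- The `k`-vector space with basis the facets of `Γ`. -/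
abbrev FacetSpace (k : Type*) [Field k] {n : ℕ} (Γ : Set (Finset (Fin n))) :=
  {σ : Finset (Fin n) // IsFacet Γ σ} →₀ k

open Classical in
/-- The basis-preserving linear map between facet spaces: the basis vector of a facet `σ`
of `Γ₁` is sent to the same basis vector if `σ` is a facet of `Γ₂`, and to `0` otherwise.
It specializes both to the structure maps `v^f_{s,t}`, `v^g_{s,t}` of the facet persistence
modules and to the interleaving maps `φ_t`, `ψ_t`. -/
noncomputable def structMap (k : Type*) [Field k] {n : ℕ}
    (Γ₁ Γ₂ : Set (Finset (Fin n))) :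
    FacetSpace k Γ₁ →ₗ[k] FacetSpace k Γ₂ :=
  Finsupp.lsum k fun σ =>
    if h : IsFacet Γ₂ σ.1 then Finsupp.lsingle ⟨σ.1, h⟩ else 0

open Classical in
lemma structMap_single (k : Type*) [Field k] {n : ℕ}
    (Γ₁ Γ₂ : Set (Finset (Fin n))) (σ : {σ : Finset (Fin n) // IsFacet Γ₁ σ}) (a : k) :
    structMap k Γ₁ Γ₂ (Finsupp.single σ a)
      = if h : IsFacet Γ₂ σ.1 then Finsupp.single ⟨σ.1, h⟩ a else 0 := by
  simp only [structMap, Finsupp.lsum_single]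
  split
  · simp [Finsupp.lsingle]
  · simp

open Classical in
lemma structMap_comp_eq (k : Type*) [Field k] {n : ℕ}
    (Γ₁ Γ₂ Γ₂' Γ₃ : Set (Finset (Fin n)))
    (H : ∀ σ : Finset (Fin n), IsFacet Γ₁ σ → IsFacet Γ₃ σ →
      (IsFacet Γ₂ σ ↔ IsFacet Γ₂' σ)) :
    (structMap k Γ₂ Γ₃).comp (structMap k Γ₁ Γ₂)
      = (structMap k Γ₂' Γ₃).comp (structMap k Γ₁ Γ₂') := by
  apply Finsupp.lhom_ext
  intro σ a
  simp only [LinearMap.comp_apply, structMap_single]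
  by_cases h3 : IsFacet Γ₃ σ.1
  · by_cases h2 : IsFacet Γ₂ σ.1
    · have h2' : IsFacet Γ₂' σ.1 := (H σ.1 σ.2 h3).mp h2
      simp [h2, h2', structMap_single, h3]
    · have h2' : ¬ IsFacet Γ₂' σ.1 := fun h => h2 ((H σ.1 σ.2 h3).mpr h)
      simp [h2, h2']
  · by_cases h2 : IsFacet Γ₂ σ.1 <;> by_cases h2' : IsFacet Γ₂' σ.1 <;>
      simp [h2, h2', structMap_single, h3]

lemma key_facets {n : ℕ} (Δ : Set (Finset (Fin n)))
    (f g : Finset (Fin n) → ℝ) (δ : ℝ)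
    (hfg : ∀ σ ∈ Δ, g σ ≤ f σ + δ)
    (s t : ℝ) (hst : s ≤ t)
    (σ : Finset (Fin n))
    (h1 : IsFacet (sublevel Δ f s) σ) (h3 : IsFacet (sublevel Δ g (t + δ)) σ) :
    IsFacet (sublevel Δ f t) σ ∧ IsFacet (sublevel Δ g (s + δ)) σ := by
  obtain ⟨⟨hσΔ, hfs⟩, _⟩ := h1
  obtain ⟨_, hmax3⟩ := h3
  constructor
  · refine ⟨⟨hσΔ, hfs.trans hst⟩, ?_⟩
    intro τ ⟨hτΔ, hft⟩ hsub
    exact hmax3 τ ⟨hτΔ, (hfg τ hτΔ).trans (by linarith)⟩ hsub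
  · refine ⟨⟨hσΔ, (hfg σ hσΔ).trans (by linarith)⟩, ?_⟩
    intro τ ⟨hτΔ, hgt⟩ hsub
    exact hmax3 τ ⟨hτΔ, hgt.trans (by linarith)⟩ hsub

/-- **Interleaving squares commute.** For monotonic `f, g` with `|f − g| ≤ δ` on `Δ` and
`s ≤ t`, one has `φ_t ∘ v^f_{s,t} = v^g_{s+δ,t+δ} ∘ φ_s` and
`ψ_t ∘ v^g_{s,t} = v^f_{s+δ,t+δ} ∘ ψ_s`. -/
theorem interleaving_squares_commute (k : Type*) [Field k] (n : ℕ)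
    (Δ : Set (Finset (Fin n)))
    (hdown : ∀ F ∈ Δ, ∀ G : Finset (Fin n), G ⊆ F → G ∈ Δ)
    (hempty : (∅ : Finset (Fin n)) ∈ Δ)
    (f g : Finset (Fin n) → ℝ)
    (hmonof : ∀ τ ∈ Δ, ∀ σ ∈ Δ, τ ⊆ σ → f τ ≤ f σ)
    (hmonog : ∀ τ ∈ Δ, ∀ σ ∈ Δ, τ ⊆ σ → g τ ≤ g σ)
    (δ : ℝ) (hδ : 0 ≤ δ)
    (hfg : ∀ σ ∈ Δ, |f σ - g σ| ≤ δ)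
    (s t : ℝ) (hst : s ≤ t) :
    ((structMap k (sublevel Δ f t) (sublevel Δ g (t + δ))).comp
        (structMap k (sublevel Δ f s) (sublevel Δ f t))
      = (structMap k (sublevel Δ g (s + δ)) (sublevel Δ g (t + δ))).comp
          (structMap k (sublevel Δ f s) (sublevel Δ g (s + δ)))) ∧
    ((structMap k (sublevel Δ g t) (sublevel Δ f (t + δ))).comp
        (structMap k (sublevel Δ g s) (sublevel Δ g t))
      = (structMap k (sublevel Δ f (s + δ)) (sublevel Δ f (t + δ))).comp
          (structMap k (sublevel Δ g s) (sublevel Δ f (s + δ)))) := by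
  have hgf : ∀ σ ∈ Δ, g σ ≤ f σ + δ := fun σ h => by
    have := hfg σ h; have := abs_le.mp this; linarith [this.1]
  have hfg' : ∀ σ ∈ Δ, f σ ≤ g σ + δ := fun σ h => by
    have := hfg σ h; have := abs_le.mp this; linarith [(abs_le.mp (hfg σ h)).2]
  constructor
  · apply structMap_comp_eq
    intro σ h1 h3
    have := key_facets Δ f g δ hgf s t hst σ h1 h3
    exact ⟨fun _ => this.2, fun _ => this.1⟩
  · apply structMap_comp_eq
    intro σ h1 h3
    have := key_facets Δ g f δ hfg' s t hst σ h1 h3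
    exact ⟨fun _ => this.2, fun _ => this.1⟩
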